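/- Let H be a finite hypergroup and Z_∞(H) its hypercenter (the terminal term of the upper central series). Then H//Z_∞(H) is weakly nilpotent if and only if H is weakly nilpotent; in fact if H#Z_∞(H) is weakly nilpotent then H = Z_∞(H). Equivalently, Z(H//Z_∞(H)) is trivial whenever Z_∞(H) ≠ H. -/

import Mathlib

/-- A hypergroup: a set with a hypermultiplication, identity and involution
satisfying (H1), (H2), (H3). -/
structure Hypergroup (H : Type*) where
  hmul : H → H → Set H
  one : H
  star : H → H
  assoc : ∀ p q r : H, (⋃ x ∈ hmul q r, hmul p x) = ⋃ x ∈ hmul p q, hmul x r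
  hmul_one : ∀ s : H, hmul s one = {s}
  inv_left : ∀ p q r : H, r ∈ hmul p q → q ∈ hmul (star p) r
  inv_right : ∀ p q r : H, r ∈ hmul p q → p ∈ hmul r (star q)

namespace Hypergroup

variable {H : Type*} (G : Hypergroup H)

/-- Complex (set) product: `AB = ⋃_{a ∈ A, b ∈ B} ab`. -/
def smul (A B : Set H) : Set H := ⋃ a ∈ A, ⋃ b ∈ B, G.hmul a b

/-- `A* = { a* | a ∈ A }`. -/
def sstar (A : Set H) : Set H := G.star '' A

/-- A nonempty subset `F` is closed if `F*F ⊆ F`. -/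
def IsClosed (F : Set H) : Prop := F.Nonempty ∧ G.smul (G.sstar F) F ⊆ F

/-- `F` is normal in `K`: `Fk ⊆ kF` for all `k ∈ K`. -/
def IsNormalIn (F K : Set H) : Prop := ∀ k ∈ K, G.smul F {k} ⊆ G.smul {k} F

/-- `F` is strongly normal in `K`: `k*Fk ⊆ F` for all `k ∈ K`. -/
def IsStronglyNormalIn (F K : Set H) : Prop :=
  ∀ k ∈ K, G.smul (G.smul {G.star k} F) {k} ⊆ F

/-- An element `s` is thin if `s*s = {1}`. -/
def IsThinElem (s : H) : Prop := G.hmul (G.star s) s = {G.one}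

/-- A hypergroup is thin if all elements are thin. -/
def IsThin : Prop := ∀ s : H, G.IsThinElem s

/-- The center `Z(H) = {h | hx = xh for all x, h*h = {1}}`. -/
def center : Set H :=
  {h | (∀ x : H, G.hmul h x = G.hmul x h) ∧ G.hmul (G.star h) h = {G.one}}

/-- The class `h^F := FhF`. -/
def cls (F : Set H) (h : H) : Set H := G.smul (G.smul F {h}) F

/-- The quotient set `H//F := { h^F | h ∈ H }`. -/
def quotSet (F : Set H) : Set (Set H) := Set.range (G.cls F)

/-- The class `h^F` as an element of `H//F`. -/
def qcls (F : Set H) (h : H) : G.quotSet F := ⟨G.cls F h, h, rfl⟩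

/-- The full preimage in `H` of the center of the quotient `H//T`:
`{h | h^T ∈ Z(H//T)}`, i.e. `h^T` commutes with all classes `y^T` and
`(h^T)*(h^T) = {1^T} = {T}`. -/
def qCenterPre (T : Set H) : Set H :=
  {h | (∀ y : H, G.cls T '' (G.smul (G.smul {h} T) {y}) =
          G.cls T '' (G.smul (G.smul {y} T) {h})) ∧
       G.cls T '' (G.smul (G.smul {G.star h} T) {h}) = {T}}

/-- The upper central series: `Z₀(H) = {1}`, and `Zᵢ₊₁(H)` is the full preimage
of `Z(H//Zᵢ(H))`, i.e. `Zᵢ₊₁(H)//Zᵢ(H) = Z(H//Zᵢ(H))`. -/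
def upperCentral : ℕ → Set H
  | 0 => {G.one}
  | n + 1 => G.qCenterPre (upperCentral n)

/-- A hypergroup is weakly nilpotent if `Zₙ(H) = H` for some `n`. -/
def WeaklyNilpotent : Prop := ∃ n : ℕ, G.upperCentral n = Set.univ

/-- `F` is subnormal in `K` via a chain of successively normal closed subsets. -/
def IsSubnormalIn (F K : Set H) : Prop :=
  ∃ n : ℕ, ∃ C : ℕ → Set H, C 0 = F ∧ C n = K ∧
    ∀ i < n, C i ⊆ C (i + 1) ∧ G.IsClosed (C (i + 1)) ∧ G.IsNormalIn (C i) (C (i + 1))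

/-- The quotient `K//N` is thin: `(k^N)*(k^N) = {1^N}` for all `k ∈ K`. -/
def QuotThin (N K : Set H) : Prop :=
  ∀ k ∈ K, G.cls N '' (G.smul (G.smul {G.star k} N) {k}) = {N}

/-- A residually-thin chain from `{1}` to `K`. -/
def RTChainOn (K : Set H) (n : ℕ) (C : ℕ → Set H) : Prop :=
  C 0 = {G.one} ∧ C n = K ∧
    ∀ i < n, C i ⊆ C (i + 1) ∧ G.IsClosed (C (i + 1)) ∧ G.QuotThin (C i) (C (i + 1))

/-- The valency `n_K = ∏ |Cᵢ₊₁//Cᵢ|` computed along some RT chain for `K`. -/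
def HasValencyOn (K : Set H) (m : ℕ) : Prop :=
  ∃ n C, G.RTChainOn K n C ∧
    m = ∏ i ∈ Finset.range n, Nat.card (G.cls (C i) '' C (i + 1))

/-- A closed `p`-subset: a closed subset whose valency is a power of `p`. -/
def PSubsetOn (p : ℕ) (K : Set H) : Prop :=
  G.IsClosed K ∧ ∃ m k : ℕ, G.HasValencyOn K m ∧ m = p ^ k

/-- `h` is `p`-valenced in `K`: for every subnormal closed `p`-subset `U` of `K`
such that `(h*)^U h^U` consists of thin elements of the quotient,
`n_{(h*)^U h^U} = |(h*)^U h^U|` is a power of `p`. -/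
def PValencedElemOn (p : ℕ) (K : Set H) (h : H) : Prop :=
  ∀ U : Set H, G.IsClosed U → U ⊆ K → G.IsSubnormalIn U K → G.PSubsetOn p U →
    (∀ x ∈ G.smul (G.smul {G.star h} U) {h},
      G.cls U '' (G.smul (G.smul {G.star x} U) {x}) = {U}) →
    ∃ k : ℕ, Nat.card (G.cls U '' (G.smul (G.smul {G.star h} U) {h})) = p ^ k

/-- `K` is `p`-valenced if all its elements are. -/
def PValencedOn (p : ℕ) (K : Set H) : Prop := ∀ h ∈ K, G.PValencedElemOn p K h

end Hypergroup
namespace Hypergroup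

variable {H : Type*} (G : Hypergroup H)

lemma mem_smul {A B : Set H} {x : H} :
    x ∈ G.smul A B ↔ ∃ a ∈ A, ∃ b ∈ B, x ∈ G.hmul a b := by
  simp [smul]

lemma smul_mono {A A' B B' : Set H} (hA : A ⊆ A') (hB : B ⊆ B') :
    G.smul A B ⊆ G.smul A' B' := by
  intro x hx
  obtain ⟨a, ha, b, hb, hx⟩ := G.mem_smul.1 hx
  exact G.mem_smul.2 ⟨a, hA ha, b, hB hb, hx⟩

lemma smul_singleton (a b : H) : G.smul {a} {b} = G.hmul a b := by
  ext x; simp [G.mem_smul]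

lemma smul_assoc (A B C : Set H) : G.smul (G.smul A B) C = G.smul A (G.smul B C) := by
  ext x
  simp only [G.mem_smul]
  constructor
  · rintro ⟨z, ⟨a, ha, b, hb, hz⟩, c, hc, hx⟩
    have h := G.assoc a b c
    have hx' : x ∈ ⋃ y ∈ G.hmul a b, G.hmul y c := Set.mem_biUnion hz hx
    rw [← h] at hx'
    obtain ⟨y, hy, hx2⟩ := Set.mem_iUnion₂.1 hx'
    exact ⟨a, ha, y, ⟨b, hb, c, hc, hy⟩, hx2⟩
  · rintro ⟨a, ha, z, ⟨b, hb, c, hc, hz⟩, hx⟩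
    have h := G.assoc a b c
    have hx' : x ∈ ⋃ y ∈ G.hmul b c, G.hmul a y := Set.mem_biUnion hz hx
    rw [h] at hx'
    obtain ⟨y, hy, hx2⟩ := Set.mem_iUnion₂.1 hx'
    exact ⟨y, ⟨a, ha, b, hb, hy⟩, c, hc, hx2⟩

lemma star_star (s : H) : G.star (G.star s) = s := by
  have h1 : s ∈ G.hmul s G.one := by rw [G.hmul_one]; rfl
  have h2 : G.one ∈ G.hmul (G.star s) s := G.inv_left s G.one s h1
  have h3 : s ∈ G.hmul (G.star (G.star s)) G.one := G.inv_left _ _ _ h2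
  rw [G.hmul_one] at h3
  exact h3.symm

lemma one_mem_star_hmul (s : H) : G.one ∈ G.hmul (G.star s) s := by
  have h1 : s ∈ G.hmul s G.one := by rw [G.hmul_one]; rfl
  exact G.inv_left s G.one s h1

lemma one_hmul (s : H) : G.hmul G.one s = {s} := by
  apply Set.Subset.antisymm
  · intro c hc
    have h1 : G.one ∈ G.hmul c (G.star s) := G.inv_right _ _ _ hc
    have h2 : G.star s ∈ G.hmul (G.star c) G.one := G.inv_left _ _ _ h1
    rw [G.hmul_one] at h2
    have := congrArg G.star h2
    rw [G.star_star, G.star_star] at this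
    exact this.symm
  · rw [Set.singleton_subset_iff]
    have h1 : G.one ∈ G.hmul (G.star (G.star s)) (G.star s) := G.one_mem_star_hmul _
    rw [G.star_star] at h1
    have h2 : s ∈ G.hmul G.one (G.star (G.star s)) := G.inv_right _ _ _ h1
    rwa [G.star_star] at h2

lemma star_one : G.star G.one = G.one := by
  have h1 : G.one ∈ G.hmul G.one G.one := by rw [G.one_hmul]; rfl
  have h2 : G.one ∈ G.hmul G.one (G.star G.one) := G.inv_right _ _ _ h1
  rw [G.one_hmul] at h2
  exact h2.symm

lemma hmul_nonempty (p q : H) : (G.hmul p q).Nonempty := by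
  have h := G.assoc p q (G.star q)
  have h1 : G.one ∈ G.hmul q (G.star q) := by
    have := G.one_mem_star_hmul (G.star q); rwa [G.star_star] at this
  have hp : p ∈ ⋃ x ∈ G.hmul q (G.star q), G.hmul p x := by
    refine Set.mem_biUnion h1 ?_
    rw [G.hmul_one]; rfl
  rw [h] at hp
  obtain ⟨x, hx, _⟩ := Set.mem_iUnion₂.1 hp
  exact ⟨x, hx⟩

lemma smul_nonempty {A B : Set H} (hA : A.Nonempty) (hB : B.Nonempty) :
    (G.smul A B).Nonempty := by
  obtain ⟨a, ha⟩ := hA; obtain ⟨b, hb⟩ := hB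
  obtain ⟨x, hx⟩ := G.hmul_nonempty a b
  exact ⟨x, G.mem_smul.2 ⟨a, ha, b, hb, hx⟩⟩

lemma star_mem_hmul {p q r : H} (h : r ∈ G.hmul p q) :
    G.star r ∈ G.hmul (G.star q) (G.star p) := by
  have h1 : q ∈ G.hmul (G.star p) r := G.inv_left _ _ _ h
  have h2 : G.star p ∈ G.hmul q (G.star r) := G.inv_right _ _ _ h1
  exact G.inv_left _ _ _ h2

lemma mem_sstar {A : Set H} {x : H} : x ∈ G.sstar A ↔ G.star x ∈ A := by
  constructor
  · rintro ⟨a, ha, rfl⟩; rwa [G.star_star]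
  · intro h; exact ⟨G.star x, h, G.star_star x⟩

lemma sstar_singleton (a : H) : G.sstar {a} = {G.star a} := Set.image_singleton

lemma sstar_smul (A B : Set H) :
    G.sstar (G.smul A B) = G.smul (G.sstar B) (G.sstar A) := by
  ext x
  rw [G.mem_sstar, G.mem_smul, G.mem_smul]
  constructor
  · rintro ⟨a, ha, b, hb, hx⟩
    refine ⟨G.star b, G.mem_sstar.2 (by rwa [G.star_star]), G.star a,
      G.mem_sstar.2 (by rwa [G.star_star]), ?_⟩
    have := G.star_mem_hmul hx
    rwa [G.star_star] at this
  · rintro ⟨b', hb', a', ha', hx⟩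
    refine ⟨G.star a', G.mem_sstar.1 ha', G.star b', G.mem_sstar.1 hb', ?_⟩
    exact G.star_mem_hmul hx

lemma smul_one_left (A : Set H) : G.smul {G.one} A = A := by
  ext x
  rw [G.mem_smul]
  constructor
  · rintro ⟨a, ha, b, hb, hx⟩
    rw [Set.mem_singleton_iff] at ha; subst ha
    rw [G.one_hmul, Set.mem_singleton_iff] at hx; subst hx; exact hb
  · intro hx
    exact ⟨G.one, rfl, x, hx, by rw [G.one_hmul]; rfl⟩

lemma smul_one_right (A : Set H) : G.smul A {G.one} = A := by
  ext x
  rw [G.mem_smul]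
  constructor
  · rintro ⟨a, ha, b, hb, hx⟩
    rw [Set.mem_singleton_iff] at hb; subst hb
    rw [G.hmul_one, Set.mem_singleton_iff] at hx; subst hx; exact ha
  · intro hx
    exact ⟨x, hx, G.one, rfl, by rw [G.hmul_one]; rfl⟩

end Hypergroup
namespace Hypergroup

variable {H : Type*} (G : Hypergroup H)

/-- A convenient closure predicate. -/
def Nice (T : Set H) : Prop :=
  G.one ∈ T ∧ G.smul T T ⊆ T ∧ G.sstar T ⊆ T

lemma Nice.one_mem {H : Type*} {G : Hypergroup H} {T : Set H} (h : G.Nice T) :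
    G.one ∈ T := h.1

lemma Nice.star_mem {H : Type*} {G : Hypergroup H} {T : Set H} (h : G.Nice T)
    {t : H} (ht : t ∈ T) : G.star t ∈ T := h.2.2 ⟨t, ht, rfl⟩

lemma Nice.smul_self {H : Type*} {G : Hypergroup H} {T : Set H} (h : G.Nice T) :
    G.smul T T = T := by
  apply Set.Subset.antisymm h.2.1
  intro t ht
  exact G.mem_smul.2 ⟨t, ht, G.one, h.1, by rw [G.hmul_one]; rfl⟩

lemma Nice.sstar_eq {H : Type*} {G : Hypergroup H} {T : Set H} (h : G.Nice T) :
    G.sstar T = T := by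
  apply Set.Subset.antisymm h.2.2
  intro t ht
  exact G.mem_sstar.2 (h.star_mem ht)

lemma nice_one : G.Nice {G.one} := by
  refine ⟨rfl, ?_, ?_⟩
  · rw [G.smul_one_left]
  · rw [G.sstar_singleton, G.star_one]

lemma nice_univ : G.Nice Set.univ :=
  ⟨trivial, Set.subset_univ _, Set.subset_univ _⟩

lemma subset_smul_left {T A : Set H} (h1 : G.one ∈ T) : A ⊆ G.smul T A :=
  fun a ha => G.mem_smul.2 ⟨G.one, h1, a, ha, by rw [G.one_hmul]; rfl⟩

lemma subset_smul_right {T A : Set H} (h1 : G.one ∈ T) : A ⊆ G.smul A T :=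
  fun a ha => G.mem_smul.2 ⟨a, ha, G.one, h1, by rw [G.hmul_one]; rfl⟩

lemma subset_TST {T S : Set H} (h1 : G.one ∈ T) : S ⊆ G.smul (G.smul T S) T :=
  (G.subset_smul_left h1).trans (G.subset_smul_right h1)

lemma mem_cls_self {T : Set H} (h1 : G.one ∈ T) (w : H) : w ∈ G.cls T w :=
  G.subset_TST h1 rfl

lemma smul_T_cls {T : Set H} (hN : G.Nice T) (w : H) :
    G.smul T (G.cls T w) = G.cls T w := by
  show G.smul T (G.smul (G.smul T {w}) T) = _
  rw [← G.smul_assoc, ← G.smul_assoc, hN.smul_self]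
  rfl

lemma cls_smul_T {T : Set H} (hN : G.Nice T) (w : H) :
    G.smul (G.cls T w) T = G.cls T w := by
  show G.smul (G.smul (G.smul T {w}) T) T = _
  rw [G.smul_assoc (G.smul T {w}), hN.smul_self]
  rfl

lemma cls_subset_of_mem {T : Set H} (hN : G.Nice T) {u w : H} (hu : u ∈ G.cls T w) :
    G.cls T u ⊆ G.cls T w := by
  have : G.cls T u ⊆ G.smul (G.smul T (G.cls T w)) T :=
    G.smul_mono (G.smul_mono (subset_rfl) (Set.singleton_subset_iff.2 hu)) subset_rfl
  rwa [G.smul_T_cls hN, G.cls_smul_T hN] at this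

lemma mem_cls_symm {T : Set H} (hN : G.Nice T) {u w : H} (hu : u ∈ G.cls T w) :
    w ∈ G.cls T u := by
  obtain ⟨z, hz, c, hc, hu'⟩ := G.mem_smul.1 hu
  obtain ⟨t, ht, w', hw', hz'⟩ := G.mem_smul.1 hz
  rw [Set.mem_singleton_iff] at hw'; rw [hw'] at hz'
  have h1 : w ∈ G.hmul (G.star t) z := G.inv_left _ _ _ hz'
  have h2 : z ∈ G.hmul u (G.star c) := G.inv_right _ _ _ hu'
  have : w ∈ G.smul (G.smul {G.star t} {u}) {G.star c} := by
    rw [G.smul_assoc]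
    exact G.mem_smul.2 ⟨G.star t, rfl, z, G.mem_smul.2 ⟨u, rfl, G.star c, rfl, h2⟩, h1⟩
  obtain ⟨z', hz', c', hc', hw⟩ := G.mem_smul.1 this
  rw [Set.mem_singleton_iff] at hc'; subst hc'
  obtain ⟨t', ht', u', hu'', hz''⟩ := G.mem_smul.1 hz'
  rw [Set.mem_singleton_iff] at ht'
  rw [Set.mem_singleton_iff] at hu''
  rw [ht', hu''] at hz''
  exact G.mem_smul.2 ⟨z', G.mem_smul.2 ⟨G.star t, hN.star_mem ht, u, rfl, hz''⟩,
    G.star c, hN.star_mem hc, hw⟩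

lemma cls_eq_of_mem {T : Set H} (hN : G.Nice T) {u w : H} (hu : u ∈ G.cls T w) :
    G.cls T u = G.cls T w :=
  Set.Subset.antisymm (G.cls_subset_of_mem hN hu)
    (G.cls_subset_of_mem hN (G.mem_cls_symm hN hu))

lemma cls_of_mem_T {T : Set H} (hN : G.Nice T) {t : H} (ht : t ∈ T) :
    G.cls T t = T := by
  apply Set.Subset.antisymm
  · have : G.cls T t ⊆ G.smul (G.smul T T) T :=
      G.smul_mono (G.smul_mono subset_rfl (Set.singleton_subset_iff.2 ht)) subset_rfl
    rwa [hN.smul_self, hN.smul_self] at this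
  · intro s hs
    obtain ⟨a, ha⟩ := G.hmul_nonempty s (G.star t)
    have haT : a ∈ T := hN.2.1 (G.mem_smul.2 ⟨s, hs, G.star t, hN.star_mem ht, ha⟩)
    have hsa : s ∈ G.hmul a (G.star (G.star t)) := G.inv_right _ _ _ ha
    rw [G.star_star] at hsa
    exact G.mem_smul.2 ⟨s, G.mem_smul.2 ⟨a, haT, t, rfl, hsa⟩, G.one, hN.1,
      by rw [G.hmul_one]; rfl⟩

lemma cls_one {T : Set H} (hN : G.Nice T) : G.cls T G.one = T :=
  G.cls_of_mem_T hN hN.1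

lemma TST_eq_iUnion (T S : Set H) :
    G.smul (G.smul T S) T = ⋃ w ∈ S, G.cls T w := by
  ext x
  simp only [Set.mem_iUnion]
  constructor
  · intro hx
    obtain ⟨z, hz, c, hc, hx'⟩ := G.mem_smul.1 hx
    obtain ⟨t, ht, w, hw, hz'⟩ := G.mem_smul.1 hz
    exact ⟨w, hw, G.mem_smul.2 ⟨z, G.mem_smul.2 ⟨t, ht, w, rfl, hz'⟩, c, hc, hx'⟩⟩
  · rintro ⟨w, hw, hx⟩
    obtain ⟨z, hz, c, hc, hx'⟩ := G.mem_smul.1 hx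
    obtain ⟨t, ht, w', hw', hz'⟩ := G.mem_smul.1 hz
    rw [Set.mem_singleton_iff] at hw'; subst hw'
    exact G.mem_smul.2 ⟨z, G.mem_smul.2 ⟨t, ht, w', hw, hz'⟩, c, hc, hx'⟩

lemma cls_image_eq_iff {T : Set H} (hN : G.Nice T) (S₁ S₂ : Set H) :
    G.cls T '' S₁ = G.cls T '' S₂ ↔
      G.smul (G.smul T S₁) T = G.smul (G.smul T S₂) T := by
  constructor
  · intro h
    rw [G.TST_eq_iUnion, G.TST_eq_iUnion, ← Set.sUnion_image, ← Set.sUnion_image, h]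
  · intro h
    ext A
    simp only [Set.mem_image]
    constructor
    · rintro ⟨w, hw, rfl⟩
      have : w ∈ ⋃ w' ∈ S₂, G.cls T w' := by
        rw [← G.TST_eq_iUnion, ← h]
        exact G.subset_TST hN.1 hw
      obtain ⟨w', hw', hww'⟩ := Set.mem_iUnion₂.1 this
      exact ⟨w', hw', (G.cls_eq_of_mem hN hww').symm⟩
    · rintro ⟨w, hw, rfl⟩
      have : w ∈ ⋃ w' ∈ S₁, G.cls T w' := by
        rw [← G.TST_eq_iUnion, h]
        exact G.subset_TST hN.1 hw
      obtain ⟨w', hw', hww'⟩ := Set.mem_iUnion₂.1 this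
      exact ⟨w', hw', (G.cls_eq_of_mem hN hww').symm⟩

lemma cls_image_eq_singleton_iff {T S : Set H} (hN : G.Nice T) (hS : S.Nonempty) :
    G.cls T '' S = {T} ↔ S ⊆ T := by
  constructor
  · intro h u hu
    have : G.cls T u ∈ G.cls T '' S := ⟨u, hu, rfl⟩
    rw [h, Set.mem_singleton_iff] at this
    have := G.mem_cls_self hN.1 u
    rwa [‹G.cls T u = T›] at this
  · intro h
    rw [Set.eq_singleton_iff_nonempty_unique_mem]
    refine ⟨hS.image _, ?_⟩
    rintro A ⟨u, hu, rfl⟩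
    exact G.cls_of_mem_T hN (h hu)

/-- `T h T y T` -/
def tprod (T : Set H) (a b : H) : Set H :=
  G.smul (G.smul T (G.smul (G.smul {a} T) {b})) T

lemma mem_qCenterPre_iff {T : Set H} (hN : G.Nice T) (h : H) :
    h ∈ G.qCenterPre T ↔
      (∀ y, G.tprod T h y = G.tprod T y h) ∧
        G.smul (G.smul {G.star h} T) {h} ⊆ T := by
  show (_ ∧ _) ↔ _
  apply and_congr
  · apply forall_congr'
    intro y
    exact G.cls_image_eq_iff hN _ _
  · exact G.cls_image_eq_singleton_iff hN
      (G.smul_nonempty (G.smul_nonempty ⟨_, rfl⟩ ⟨_, hN.1⟩) ⟨_, rfl⟩)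

lemma sstar_tprod {T : Set H} (hN : G.Nice T) (a b : H) :
    G.sstar (G.tprod T a b) = G.tprod T (G.star b) (G.star a) := by
  simp only [tprod, sstar_smul, sstar_singleton, hN.sstar_eq, smul_assoc]

lemma tprod_eq₁ (T : Set H) (a b : H) :
    G.tprod T a b = G.smul (G.smul T {a}) (G.cls T b) := by
  simp only [tprod, cls, smul_assoc]

end Hypergroup
namespace Hypergroup

variable {H : Type*} (G : Hypergroup H)

lemma left_sub {T : Set H} {h : H}
    (h2 : G.smul (G.smul {G.star h} T) {h} ⊆ T) :
    G.smul T {h} ⊆ G.smul {h} T := by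
  intro u hu
  obtain ⟨t, ht, b, hb, hu'⟩ := G.mem_smul.1 hu
  rw [Set.mem_singleton_iff] at hb; rw [hb] at hu'
  obtain ⟨x, hx⟩ := G.hmul_nonempty (G.star h) u
  have hu2 : u ∈ G.hmul (G.star (G.star h)) x := G.inv_left _ _ _ hx
  rw [G.star_star] at hu2
  have hxT : x ∈ T := by
    apply h2
    rw [G.smul_assoc]
    exact G.mem_smul.2 ⟨G.star h, rfl, u, G.mem_smul.2 ⟨t, ht, h, rfl, hu'⟩, hx⟩
  exact G.mem_smul.2 ⟨h, rfl, x, hxT, hu2⟩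

lemma right_sub {T : Set H} {h : H}
    (h2 : G.smul (G.smul {h} T) {G.star h} ⊆ T) :
    G.smul {h} T ⊆ G.smul T {h} := by
  intro u hu
  obtain ⟨b, hb, t, ht, hu'⟩ := G.mem_smul.1 hu
  rw [Set.mem_singleton_iff] at hb; rw [hb] at hu'
  obtain ⟨x, hx⟩ := G.hmul_nonempty u (G.star h)
  have hu2 : u ∈ G.hmul x (G.star (G.star h)) := G.inv_right _ _ _ hx
  rw [G.star_star] at hu2
  have hxT : x ∈ T :=
    h2 (G.mem_smul.2 ⟨u, G.mem_smul.2 ⟨h, rfl, t, ht, hu'⟩, G.star h, rfl, hx⟩)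
  exact G.mem_smul.2 ⟨x, hxT, h, rfl, hu2⟩

lemma conj_sub {T : Set H} (hN : G.Nice T) {h : H}
    (C1 : ∀ y, G.tprod T h y = G.tprod T y h)
    (C2 : G.smul (G.smul {G.star h} T) {h} ⊆ T) :
    G.smul (G.smul {h} T) {G.star h} ⊆ T := by
  have sub1 : G.smul (G.smul {h} T) {G.star h} ⊆ G.tprod T h (G.star h) :=
    G.subset_TST hN.1
  rw [C1 (G.star h)] at sub1
  refine sub1.trans ?_
  have : G.tprod T (G.star h) h ⊆ G.smul (G.smul T T) T :=
    G.smul_mono (G.smul_mono subset_rfl C2) subset_rfl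
  rwa [hN.smul_self, hN.smul_self] at this

lemma cls_eq_left {T : Set H} (hN : G.Nice T) {h : H}
    (hcomm : G.smul T {h} = G.smul {h} T) :
    G.cls T h = G.smul T {h} := by
  show G.smul (G.smul T {h}) T = _
  rw [hcomm, G.smul_assoc, hN.smul_self, ← hcomm]

lemma nice_qCenterPre {T : Set H} (hN : G.Nice T) : G.Nice (G.qCenterPre T) := by
  have onemem : G.one ∈ G.qCenterPre T := by
    rw [G.mem_qCenterPre_iff hN]
    constructor
    · intro y
      have l : G.tprod T G.one y = G.cls T y := by
        show G.smul (G.smul T (G.smul (G.smul {G.one} T) {y})) T = _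
        rw [G.smul_one_left, ← G.smul_assoc, hN.smul_self]
        rfl
      have r : G.tprod T y G.one = G.cls T y := by
        show G.smul (G.smul T (G.smul (G.smul {y} T) {G.one})) T = _
        rw [G.smul_one_right, ← G.smul_assoc, G.smul_assoc (G.smul T {y}), hN.smul_self]
        rfl
      rw [l, r]
    · rw [G.star_one, G.smul_one_left, G.smul_one_right]
  refine ⟨onemem, ?_, ?_⟩
  · -- closed under products
    intro w hw
    obtain ⟨g, hg, h, hh, hw⟩ := G.mem_smul.1 hw
    obtain ⟨C1g, C2g⟩ := (G.mem_qCenterPre_iff hN g).1 hg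
    obtain ⟨C1h, C2h⟩ := (G.mem_qCenterPre_iff hN h).1 hh
    have C2g' := G.conj_sub hN C1g C2g
    have C2h' := G.conj_sub hN C1h C2h
    have commg : G.smul T {g} = G.smul {g} T :=
      Set.Subset.antisymm (G.left_sub C2g) (G.right_sub C2g')
    have commh : G.smul T {h} = G.smul {h} T :=
      Set.Subset.antisymm (G.left_sub C2h) (G.right_sub C2h')
    have clsg : G.cls T g = G.smul T {g} := G.cls_eq_left hN commg
    have clsh : G.cls T h = G.smul T {h} := G.cls_eq_left hN commh
    have hw' : G.star w ∈ G.hmul (G.star h) (G.star g) := G.star_mem_hmul hw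
    have C2w : G.smul (G.smul {G.star w} T) {w} ⊆ T := by
      have step1 : G.smul (G.smul {G.star w} T) {w} ⊆
          G.smul (G.smul (G.smul {G.star h} {G.star g}) T) (G.smul {g} {h}) := by
        rw [G.smul_singleton, G.smul_singleton]
        exact G.smul_mono (G.smul_mono (Set.singleton_subset_iff.2 hw') subset_rfl)
          (Set.singleton_subset_iff.2 hw)
      have step2 : G.smul (G.smul (G.smul {G.star h} {G.star g}) T) (G.smul {g} {h}) =
          G.smul {G.star h} (G.smul (G.smul (G.smul {G.star g} T) {g}) {h}) := by
        simp only [smul_assoc]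
      have step3 : G.smul {G.star h} (G.smul (G.smul (G.smul {G.star g} T) {g}) {h}) ⊆
          G.smul {G.star h} (G.smul T {h}) :=
        G.smul_mono subset_rfl (G.smul_mono C2g subset_rfl)
      refine step1.trans (step2 ▸ (step3.trans ?_))
      rw [← G.smul_assoc]
      exact C2h
    have C2w' : G.smul (G.smul {w} T) {G.star w} ⊆ T := by
      have step1 : G.smul (G.smul {w} T) {G.star w} ⊆
          G.smul (G.smul (G.smul {g} {h}) T) (G.smul {G.star h} {G.star g}) := by
        rw [G.smul_singleton, G.smul_singleton]
        exact G.smul_mono (G.smul_mono (Set.singleton_subset_iff.2 hw) subset_rfl)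
          (Set.singleton_subset_iff.2 hw')
      have step2 : G.smul (G.smul (G.smul {g} {h}) T) (G.smul {G.star h} {G.star g}) =
          G.smul {g} (G.smul (G.smul (G.smul {h} T) {G.star h}) {G.star g}) := by
        simp only [smul_assoc]
      have step3 : G.smul {g} (G.smul (G.smul (G.smul {h} T) {G.star h}) {G.star g}) ⊆
          G.smul {g} (G.smul T {G.star g}) :=
        G.smul_mono subset_rfl (G.smul_mono C2h' subset_rfl)
      refine step1.trans (step2 ▸ (step3.trans ?_))
      rw [← G.smul_assoc]
      exact C2g'
    have commw : G.smul T {w} = G.smul {w} T :=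
      Set.Subset.antisymm (G.left_sub C2w) (G.right_sub C2w')
    have clsw : G.cls T w = G.smul T {w} := G.cls_eq_left hN commw
    -- decomposition of cls T w
    have clsw2 : G.cls T w = G.smul (G.cls T g) (G.cls T h) := by
      have key : G.smul T {w} = G.smul T (G.smul {g} (G.smul {h} T)) := by
        apply Set.Subset.antisymm
        · apply G.smul_mono subset_rfl
          intro x hx
          rw [Set.mem_singleton_iff] at hx; subst hx
          exact G.mem_smul.2 ⟨g, rfl, h,
            G.mem_smul.2 ⟨h, rfl, G.one, hN.1, by rw [G.hmul_one]; rfl⟩, hw⟩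
        · have sub1 : G.smul {g} (G.smul {h} T) ⊆ G.smul {w} T := by
            have hg2 : g ∈ G.hmul w (G.star h) := G.inv_right _ _ _ hw
            have hgh : G.smul {g} {h} ⊆ G.smul (G.smul {w} {G.star h}) {h} := by
              apply G.smul_mono ?_ subset_rfl
              rw [G.smul_singleton]
              exact Set.singleton_subset_iff.2 hg2
            have e1 : G.smul {g} (G.smul {h} T) = G.smul (G.smul {g} {h}) T :=
              (G.smul_assoc _ _ _).symm
            rw [e1]
            refine (G.smul_mono hgh subset_rfl).trans ?_
            have e2 : G.smul (G.smul (G.smul {w} {G.star h}) {h}) T =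
                G.smul {w} (G.smul (G.smul {G.star h} {h}) T) := by
              simp only [smul_assoc]
            rw [e2]
            apply G.smul_mono subset_rfl
            have inner : G.smul {G.star h} {h} ⊆ T :=
              (G.smul_mono (G.subset_smul_right hN.1) subset_rfl).trans C2h
            refine (G.smul_mono inner subset_rfl).trans ?_
            rw [hN.smul_self]
          have : G.smul T (G.smul {g} (G.smul {h} T)) ⊆ G.smul T (G.smul {w} T) :=
            G.smul_mono subset_rfl sub1
          refine this.trans ?_
          rw [← G.smul_assoc]
          have : G.smul (G.smul T {w}) T = G.cls T w := rfl
          rw [this, clsw]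
      rw [clsw, key, clsg, clsh, commh, G.smul_assoc]
    -- C1 for w
    have central : ∀ (x : H), (∀ y, G.tprod T x y = G.tprod T y x) →
        G.cls T x = G.smul T {x} →
        ∀ y, G.smul (G.cls T x) (G.cls T y) = G.smul (G.smul T {y}) (G.cls T x) := by
      intro x C1x clsx y
      have e1 : G.tprod T x y = G.smul (G.cls T x) (G.cls T y) := by
        rw [G.tprod_eq₁, ← clsx]
      have e2 : G.tprod T y x = G.smul (G.smul T {y}) (G.cls T x) := G.tprod_eq₁ _ _ _
      rw [← e1, ← e2, C1x]
    rw [G.mem_qCenterPre_iff hN]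
    refine ⟨?_, C2w⟩
    intro y
    calc G.tprod T w y = G.smul (G.smul T {w}) (G.cls T y) := G.tprod_eq₁ _ _ _
      _ = G.smul (G.cls T w) (G.cls T y) := by rw [← clsw]
      _ = G.smul (G.smul (G.cls T g) (G.cls T h)) (G.cls T y) := by rw [clsw2]
      _ = G.smul (G.cls T g) (G.smul (G.cls T h) (G.cls T y)) := G.smul_assoc _ _ _
      _ = G.smul (G.cls T g) (G.smul (G.smul T {y}) (G.cls T h)) := by
          rw [central h C1h clsh y]
      _ = G.smul (G.cls T g) (G.smul (G.smul T {y}) (G.smul T (G.cls T h))) := by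
          rw [G.smul_T_cls hN]
      _ = G.smul (G.smul (G.cls T g) (G.smul (G.smul T {y}) T)) (G.cls T h) := by
          simp only [smul_assoc]
      _ = G.smul (G.smul (G.cls T g) (G.cls T y)) (G.cls T h) := rfl
      _ = G.smul (G.smul (G.smul T {y}) (G.cls T g)) (G.cls T h) := by
          rw [central g C1g clsg y]
      _ = G.smul (G.smul T {y}) (G.smul (G.cls T g) (G.cls T h)) := G.smul_assoc _ _ _
      _ = G.smul (G.smul T {y}) (G.cls T w) := by rw [← clsw2]
      _ = G.tprod T y w := (G.tprod_eq₁ _ _ _).symm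
  · -- closed under star
    intro x hx
    have hx' : G.star x ∈ G.qCenterPre T := G.mem_sstar.1 hx
    obtain ⟨C1, C2⟩ := (G.mem_qCenterPre_iff hN _).1 hx'
    rw [G.mem_qCenterPre_iff hN]
    constructor
    · intro y
      calc G.tprod T x y
          = G.tprod T (G.star (G.star x)) (G.star (G.star y)) := by
            rw [G.star_star, G.star_star]
        _ = G.sstar (G.tprod T (G.star y) (G.star x)) := (G.sstar_tprod hN _ _).symm
        _ = G.sstar (G.tprod T (G.star x) (G.star y)) := by rw [C1 (G.star y)]
        _ = G.tprod T (G.star (G.star y)) (G.star (G.star x)) := G.sstar_tprod hN _ _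
        _ = G.tprod T y x := by rw [G.star_star, G.star_star]
    · have := G.conj_sub hN C1 C2
      rwa [G.star_star] at this

end Hypergroup
namespace Hypergroup

variable {H : Type*} (G : Hypergroup H)

lemma smul_univ_right {A : Set H} (hA : A.Nonempty) : G.smul A Set.univ = Set.univ := by
  rw [Set.eq_univ_iff_forall]
  intro x
  obtain ⟨a, ha⟩ := hA
  obtain ⟨b, hb⟩ := G.hmul_nonempty (G.star a) x
  have hx : x ∈ G.hmul (G.star (G.star a)) b := G.inv_left _ _ _ hb
  rw [G.star_star] at hx
  exact G.mem_smul.2 ⟨a, ha, b, trivial, hx⟩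

lemma smul_univ_left {B : Set H} (hB : B.Nonempty) : G.smul Set.univ B = Set.univ := by
  rw [Set.eq_univ_iff_forall]
  intro x
  obtain ⟨b, hb⟩ := hB
  obtain ⟨a, ha⟩ := G.hmul_nonempty x (G.star b)
  have hx : x ∈ G.hmul a (G.star (G.star b)) := G.inv_right _ _ _ ha
  rw [G.star_star] at hx
  exact G.mem_smul.2 ⟨a, trivial, b, hb, hx⟩

lemma tprod_univ (a b : H) : G.tprod Set.univ a b = Set.univ := by
  have hu : (Set.univ : Set H).Nonempty := ⟨G.one, trivial⟩
  show G.smul (G.smul Set.univ (G.smul (G.smul {a} Set.univ) {b})) Set.univ = _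
  apply G.smul_univ_right
  exact G.smul_nonempty hu (G.smul_nonempty (G.smul_nonempty ⟨a, rfl⟩ hu) ⟨b, rfl⟩)

lemma cls_univ (x : H) : G.cls Set.univ x = Set.univ := by
  have hu : (Set.univ : Set H).Nonempty := ⟨G.one, trivial⟩
  show G.smul (G.smul Set.univ {x}) Set.univ = _
  exact G.smul_univ_right (G.smul_nonempty hu ⟨x, rfl⟩)

lemma qCenterPre_univ : G.qCenterPre Set.univ = Set.univ := by
  rw [Set.eq_univ_iff_forall]
  intro h
  rw [G.mem_qCenterPre_iff G.nice_univ]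
  exact ⟨fun y => by rw [G.tprod_univ, G.tprod_univ], Set.subset_univ _⟩

lemma nice_upperCentral : ∀ m, G.Nice (G.upperCentral m) := by
  intro m
  induction m with
  | zero => exact G.nice_one
  | succ k ih => exact G.nice_qCenterPre ih

lemma uc_stab {n : ℕ} (hstab : G.upperCentral (n + 1) = G.upperCentral n) :
    ∀ k, G.upperCentral (n + k) = G.upperCentral n := by
  intro k
  induction k with
  | zero => rfl
  | succ k ih =>
    show G.upperCentral ((n + k) + 1) = _
    show G.qCenterPre (G.upperCentral (n + k)) = _
    rw [ih]
    exact hstab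

lemma uc_univ_stab {m : ℕ} (huniv : G.upperCentral m = Set.univ) :
    ∀ k, G.upperCentral (m + k) = Set.univ := by
  intro k
  induction k with
  | zero => exact huniv
  | succ k ih =>
    show G.qCenterPre (G.upperCentral (m + k)) = _
    rw [ih]
    exact G.qCenterPre_univ

lemma tprod_one (a b : H) : G.tprod {G.one} a b = G.hmul a b := by
  show G.smul (G.smul {G.one} (G.smul (G.smul {a} {G.one}) {b})) {G.one} = _
  rw [G.smul_one_right, G.smul_one_left, G.smul_one_right, G.smul_singleton]

lemma quot_exists {F : Set H} (a : G.quotSet F) : ∃ h : H, a = G.qcls F h := by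
  obtain ⟨S, h, hh⟩ := a
  exact ⟨h, Subtype.ext hh.symm⟩

lemma val_image (F S : Set H) :
    Subtype.val '' {x : G.quotSet F | ∃ w ∈ S, x = G.qcls F w} = G.cls F '' S := by
  ext A
  constructor
  · rintro ⟨x, ⟨w, hw, rfl⟩, rfl⟩
    exact ⟨w, hw, rfl⟩
  · rintro ⟨w, hw, rfl⟩
    exact ⟨G.qcls F w, ⟨w, hw, rfl⟩, rfl⟩

end Hypergroup

/-- for a finite hypergroup `H` with hypercenter
`Z∞(H) = Zₙ(H)` (the terminal term: `Zₙ₊₁(H) = Zₙ(H)`), the quotient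
`H//Z∞(H)` is weakly nilpotent iff `H` is; in fact if `H//Z∞(H)` is weakly
nilpotent then `H = Z∞(H)`; and `Z(H//Z∞(H))` is trivial whenever
`Z∞(H) ≠ H`. -/
theorem quot_hypercenter_weaklyNilpotent {H : Type*} [Finite H] (G : Hypergroup H)
    (n : ℕ) (hstab : G.upperCentral (n + 1) = G.upperCentral n)
    (Q : Hypergroup (G.quotSet (G.upperCentral n)))
    (hmul : ∀ a b : H,
      Q.hmul (G.qcls (G.upperCentral n) a) (G.qcls (G.upperCentral n) b) =
      {x : G.quotSet (G.upperCentral n) |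
        ∃ y ∈ G.smul (G.smul {a} (G.upperCentral n)) {b},
          x = G.qcls (G.upperCentral n) y})
    (hone : Q.one = G.qcls (G.upperCentral n) G.one)
    (hstar : ∀ h : H, Q.star (G.qcls (G.upperCentral n) h) =
      G.qcls (G.upperCentral n) (G.star h)) :
    (Q.WeaklyNilpotent ↔ G.WeaklyNilpotent) ∧
    (Q.WeaklyNilpotent → G.upperCentral n = Set.univ) ∧
    (G.upperCentral n ≠ Set.univ →
      G.qCenterPre (G.upperCentral n) = G.upperCentral n) := by
  have hZnice : G.Nice (G.upperCentral n) := G.nice_upperCentral n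
  have hQoneval : (Q.one : G.quotSet (G.upperCentral n)).1 = G.upperCentral n := by
    rw [hone]
    exact G.cls_one hZnice
  have key : Q.WeaklyNilpotent → G.upperCentral n = Set.univ := by
    intro hq
    by_contra hne
    have hsub : Q.qCenterPre {Q.one} ⊆ {Q.one} := by
      intro a ha
      obtain ⟨hc1, hc2⟩ := (Q.mem_qCenterPre_iff Q.nice_one a).1 ha
      obtain ⟨h, rfl⟩ := G.quot_exists a
      have hcomm : ∀ b, Q.hmul (G.qcls (G.upperCentral n) h) b =
          Q.hmul b (G.qcls (G.upperCentral n) h) := fun b => by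
        rw [← Q.tprod_one, ← Q.tprod_one]
        exact hc1 b
      rw [Q.smul_one_right, Q.smul_singleton] at hc2
      have hstar_eq : Q.hmul (Q.star (G.qcls (G.upperCentral n) h))
          (G.qcls (G.upperCentral n) h) = {Q.one} := by
        apply Set.eq_singleton_iff_nonempty_unique_mem.2
        refine ⟨Q.hmul_nonempty _ _, fun y hy => ?_⟩
        exact Set.mem_singleton_iff.1 (hc2 hy)
      have hmem : h ∈ G.qCenterPre (G.upperCentral n) := by
        constructor
        · intro y
          have hy := hcomm (G.qcls (G.upperCentral n) y)
          rw [hmul, hmul] at hy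
          have h2 := congrArg (Set.image Subtype.val) hy
          rwa [G.val_image, G.val_image] at h2
        · rw [hstar, hmul] at hstar_eq
          have h2 := congrArg (Set.image Subtype.val) hstar_eq
          rw [G.val_image, Set.image_singleton, hQoneval] at h2
          exact h2
      have hZ : h ∈ G.upperCentral n := by
        rw [← hstab]
        exact hmem
      rw [Set.mem_singleton_iff]
      apply Subtype.ext
      rw [hQoneval]
      exact G.cls_of_mem_T hZnice hZ
    have hQfix : Q.qCenterPre {Q.one} = {Q.one} :=
      Set.Subset.antisymm hsub
        (Set.singleton_subset_iff.2 (Q.nice_qCenterPre Q.nice_one).1)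
    have hQuc : ∀ m, Q.upperCentral m = {Q.one} := by
      intro m
      induction m with
      | zero => rfl
      | succ k ih =>
        show Q.qCenterPre (Q.upperCentral k) = _
        rw [ih]
        exact hQfix
    obtain ⟨m, hm⟩ := hq
    rw [hQuc m] at hm
    obtain ⟨h0, hh0⟩ : ∃ h0 : H, h0 ∉ G.upperCentral n := by
      by_contra hcon
      push_neg at hcon
      exact hne (Set.eq_univ_iff_forall.2 hcon)
    have hmem0 : G.qcls (G.upperCentral n) h0 ∈ ({Q.one} : Set _) := by
      rw [hm]; trivial
    rw [Set.mem_singleton_iff] at hmem0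
    have hval' : G.cls (G.upperCentral n) h0 = G.upperCentral n := by
      have h3 := congrArg Subtype.val hmem0
      rw [hQoneval] at h3
      exact h3
    exact hh0 (hval' ▸ G.mem_cls_self hZnice.1 h0)
  have dirA : G.upperCentral n = Set.univ → Q.WeaklyNilpotent := by
    intro huniv
    refine ⟨0, ?_⟩
    show ({Q.one} : Set (G.quotSet (G.upperCentral n))) = Set.univ
    apply Set.eq_univ_iff_forall.2
    intro a
    rw [Set.mem_singleton_iff]
    obtain ⟨h, rfl⟩ := G.quot_exists a
    apply Subtype.ext
    rw [hone]
    show G.cls (G.upperCentral n) h = G.cls (G.upperCentral n) G.one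
    rw [huniv, G.cls_univ, G.cls_univ]
  have ZnUniv : G.WeaklyNilpotent → G.upperCentral n = Set.univ := by
    rintro ⟨m, hm⟩
    rcases le_total m n with hle | hle
    · obtain ⟨k, rfl⟩ := Nat.le.dest hle
      exact G.uc_univ_stab hm k
    · obtain ⟨k, rfl⟩ := Nat.le.dest hle
      rw [G.uc_stab hstab k] at hm
      exact hm
  exact ⟨⟨fun hq => ⟨n, key hq⟩, fun hg => dirA (ZnUniv hg)⟩, key, fun _ => hstab⟩
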